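/- arXiv:2310.14351 — 3 statements merged into one kernel-verified Lean document; each statement's English description precedes it below -/
import Mathlib

section
/- For every integer $s\ge 2$ and real $x \ge 0$, the upper incomplete gamma function satisfies $\Gamma(s,x) = \int_x^\infty y^{s-1}e^{-y}\,dy \le \frac{(x+b_s)^s - x^s}{s\, b_s} e^{-x}$, where $b_s = \Gamma(s+1)^{1/(s-1)}$. -/
open MeasureTheory Finset Filter Topology

private lemma fact_le_pow' (a : ℕ) : (a + 1).factorial ≤ (a + 1) ^ a := by
  induction a with
  | zero => simp
  | succ a ih =>
    calc (a + 2).factorial = (a + 2) * (a + 1).factorial := rfl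
    _ ≤ (a + 2) * (a + 1) ^ a := Nat.mul_le_mul_left _ ih
    _ ≤ (a + 2) * (a + 2) ^ a := Nat.mul_le_mul_left _ (Nat.pow_le_pow_left (by omega) a)
    _ = (a + 2) ^ (a + 1) := by ring

private lemma fact_pow_le (a k : ℕ) :
    ((a + 1).factorial) ^ (a + k) ≤ ((a + k + 1).factorial) ^ a := by
  induction k with
  | zero => simp
  | succ k ih =>
    have h1 : (a + 1).factorial ≤ (a + k + 2) ^ a :=
      le_trans (fact_le_pow' a) (Nat.pow_le_pow_left (by omega) a)
    calc ((a + 1).factorial) ^ (a + (k + 1))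
        = ((a + 1).factorial) ^ (a + k) * (a + 1).factorial := by ring
      _ ≤ ((a + k + 1).factorial) ^ a * (a + k + 2) ^ a := Nat.mul_le_mul ih h1
      _ = ((a + k + 1).factorial * (a + k + 2)) ^ a := (Nat.mul_pow _ _ _).symm
      _ = ((a + k + 2).factorial) ^ a := by
          rw [Nat.factorial_succ (a + k + 1), Nat.mul_comm]

/-- Pinelis' bound on the upper incomplete gamma function at integer `s ≥ 2`:
`∫_x^∞ y^{s-1} e^{-y} dy ≤ ((x+b_s)^s - x^s)/(s b_s) e^{-x}` with
`b_s = Γ(s+1)^{1/(s-1)}`. -/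
theorem stmt2 (s : ℕ) (hs : 2 ≤ s) (x : ℝ) (hx : 0 ≤ x) :
    ∫ y in Set.Ici x, y ^ (s - 1) * Real.exp (-y)
      ≤ ((x + Real.Gamma (s + 1) ^ ((1 : ℝ) / ((s : ℝ) - 1))) ^ s - x ^ s)
          / ((s : ℝ) * Real.Gamma (s + 1) ^ ((1 : ℝ) / ((s : ℝ) - 1))) * Real.exp (-x) := by
  obtain ⟨n, rfl⟩ : ∃ n, s = n + 1 := ⟨s - 1, by omega⟩
  have hn1 : 1 ≤ n := by omega
  have hn0 : (0 : ℝ) < (n : ℝ) := by exact_mod_cast hn1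
  set c : ℕ → ℝ := fun k => (n.factorial : ℝ) / (k.factorial : ℝ) with hc
  -- rewrite Gamma and the exponent
  have hGamma : Real.Gamma (((n + 1 : ℕ) : ℝ) + 1) = ((n + 1).factorial : ℝ) :=
    Real.Gamma_nat_eq_factorial (n + 1)
  have hexp : (1 : ℝ) / (((n + 1 : ℕ) : ℝ) - 1) = (1 : ℝ) / (n : ℝ) := by
    push_cast; ring_nf
  rw [hGamma, hexp]
  set b : ℝ := ((n + 1).factorial : ℝ) ^ ((1 : ℝ) / (n : ℝ)) with hbdef
  have hfacpos : (0 : ℝ) < ((n + 1).factorial : ℝ) := by exact_mod_cast (n + 1).factorial_pos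
  have hb : 0 < b := Real.rpow_pos_of_pos hfacpos _
  -- key factorial bound : m! ≤ b^(m-1) for 1 ≤ m ≤ n+1
  have key : ∀ m : ℕ, 1 ≤ m → m ≤ n + 1 → ((m.factorial : ℝ)) ≤ b ^ (m - 1) := by
    intro m h1 h2
    obtain ⟨a, rfl⟩ : ∃ a, m = a + 1 := ⟨m - 1, by omega⟩
    have ha : a ≤ n := by omega
    have hnat : ((a + 1).factorial) ^ n ≤ ((n + 1).factorial) ^ a := by
      have h := fact_pow_le a (n - a)
      have e : a + (n - a) = n := by omega
      rw [e] at h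
      exact h
    have hr : ((a + 1).factorial : ℝ) ^ n ≤ ((n + 1).factorial : ℝ) ^ a := by
      exact_mod_cast hnat
    have h3 := Real.rpow_le_rpow (by positivity) hr
      (by positivity : (0 : ℝ) ≤ 1 / (n : ℝ))
    rw [← Real.rpow_natCast (((a + 1).factorial : ℝ)) n,
      ← Real.rpow_natCast (((n + 1).factorial : ℝ)) a,
      ← Real.rpow_mul hfacpos.le, ← Real.rpow_mul (by positivity)] at h3
    have e1 : (n : ℝ) * (1 / (n : ℝ)) = 1 := by field_simp
    have e2 : (a : ℝ) * (1 / (n : ℝ)) = (1 / (n : ℝ)) * (a : ℝ) := by ring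
    rw [e1, e2, Real.rpow_one, Real.rpow_mul hfacpos.le, Real.rpow_natCast] at h3
    have hb2 : b ^ (a + 1 - 1) = (((n + 1).factorial : ℝ) ^ ((1 : ℝ) / (n : ℝ))) ^ a := by
      rw [hbdef]; congr 1
    rw [hb2]
    exact h3
  -- coefficientwise bound
  have coeff : ∀ k, k ≤ n →
      (((n + 1).factorial : ℝ) / (k.factorial : ℝ)) * b ≤ ((n + 1).choose k : ℝ) * b ^ (n + 1 - k) := by
    intro k hk
    have hks : k ≤ n + 1 := by omega
    have hkfpos : (0 : ℝ) < (k.factorial : ℝ) := by exact_mod_cast k.factorial_pos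
    have hfk : ((n + 1).choose k : ℝ) * (k.factorial : ℝ) * ((n + 1 - k).factorial : ℝ)
        = ((n + 1).factorial : ℝ) := by
      exact_mod_cast Nat.choose_mul_factorial_mul_factorial hks
    have hdiv : ((n + 1).factorial : ℝ) / (k.factorial : ℝ)
        = ((n + 1).choose k : ℝ) * ((n + 1 - k).factorial : ℝ) := by
      rw [← hfk]
      field_simp
    have hm : ((n + 1 - k).factorial : ℝ) ≤ b ^ (n + 1 - k - 1) :=
      key (n + 1 - k) (by omega) (by omega)
    have hpow : b ^ (n + 1 - k - 1) * b = b ^ (n + 1 - k) := by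
      rw [← pow_succ]
      congr 1
      omega
    calc ((n + 1).factorial : ℝ) / (k.factorial : ℝ) * b
        = ((n + 1).choose k : ℝ) * (((n + 1 - k).factorial : ℝ) * b) := by rw [hdiv]; ring
      _ ≤ ((n + 1).choose k : ℝ) * (b ^ (n + 1 - k - 1) * b) := by
          have : ((n + 1 - k).factorial : ℝ) * b ≤ b ^ (n + 1 - k - 1) * b :=
            mul_le_mul_of_nonneg_right hm hb.le
          exact mul_le_mul_of_nonneg_left this (by positivity)
      _ = ((n + 1).choose k : ℝ) * b ^ (n + 1 - k) := by rw [hpow]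
  -- main polynomial inequality
  have main : (∑ k ∈ range (n + 1), c k * x ^ k) * (((n + 1 : ℕ) : ℝ) * b)
      ≤ (x + b) ^ (n + 1) - x ^ (n + 1) := by
    have hexpand : (x + b) ^ (n + 1)
        = ∑ k ∈ range (n + 2), x ^ k * b ^ (n + 1 - k) * ((n + 1).choose k : ℝ) :=
      add_pow x b (n + 1)
    have hexpand2 : (x + b) ^ (n + 1) - x ^ (n + 1)
        = ∑ k ∈ range (n + 1), x ^ k * b ^ (n + 1 - k) * ((n + 1).choose k : ℝ) := by
      rw [hexpand, Finset.sum_range_succ, Nat.sub_self, Nat.choose_self]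
      push_cast
      ring
    rw [hexpand2, Finset.sum_mul]
    apply Finset.sum_le_sum
    intro k hk
    have hk' : k ≤ n := by simpa using Nat.lt_succ_iff.mp (Finset.mem_range.mp hk)
    have hsc : c k * x ^ k * (((n + 1 : ℕ) : ℝ) * b)
        = (((n + 1).factorial : ℝ) / (k.factorial : ℝ)) * b * x ^ k := by
      rw [hc]
      have : ((n + 1).factorial : ℝ) = ((n + 1 : ℕ) : ℝ) * (n.factorial : ℝ) := by
        push_cast [Nat.factorial_succ]
        ring
      rw [this]
      ring
    rw [hsc]
    have := mul_le_mul_of_nonneg_right (coeff k hk') (pow_nonneg hx k)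
    calc (((n + 1).factorial : ℝ) / (k.factorial : ℝ)) * b * x ^ k
        ≤ ((n + 1).choose k : ℝ) * b ^ (n + 1 - k) * x ^ k := this
      _ = x ^ k * b ^ (n + 1 - k) * ((n + 1).choose k : ℝ) := by ring
  -- derivative of the antiderivative
  have hderiv : ∀ y : ℝ,
      HasDerivAt (fun y => -((∑ k ∈ range (n + 1), c k * y ^ k) * Real.exp (-y)))
        (y ^ n * Real.exp (-y)) y := by
    intro y
    have hP : HasDerivAt (fun y => ∑ k ∈ range (n + 1), c k * y ^ k)
        (∑ k ∈ range (n + 1), c k * ((k : ℝ) * y ^ (k - 1))) y :=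
      HasDerivAt.fun_sum fun k _ => (hasDerivAt_pow k y).const_mul (c k)
    have hE : HasDerivAt (fun y => Real.exp (-y)) (-Real.exp (-y)) y := by
      simpa [Function.comp_def] using (Real.hasDerivAt_exp (-y)).comp y (hasDerivAt_neg y)
    have h := (hP.mul hE).neg
    have hsum : (∑ k ∈ range (n + 1), c k * ((k : ℝ) * y ^ (k - 1)))
        = (∑ k ∈ range (n + 1), c k * y ^ k) - y ^ n := by
      rw [Finset.sum_range_succ' (fun k => c k * ((k : ℝ) * y ^ (k - 1))) n]
      simp only [Nat.cast_zero, zero_mul, mul_zero, add_zero]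
      rw [Finset.sum_range_succ (fun k => c k * y ^ k) n]
      have hcn : c n = 1 := by
        rw [hc]
        exact div_self (by exact_mod_cast n.factorial_pos.ne')
      rw [hcn, one_mul, add_sub_cancel_right]
      apply Finset.sum_congr rfl
      intro k _
      have hfs : ((k + 1).factorial : ℝ) = ((k : ℝ) + 1) * (k.factorial : ℝ) := by
        push_cast [Nat.factorial_succ]
        ring
      have hkf : (0 : ℝ) < (k.factorial : ℝ) := by exact_mod_cast k.factorial_pos
      rw [hc]
      simp only [Nat.add_sub_cancel]
      push_cast
      rw [hfs]
      field_simp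
    have heq : y ^ n * Real.exp (-y)
        = -((∑ k ∈ range (n + 1), c k * ((k : ℝ) * y ^ (k - 1))) * Real.exp (-y)
            + (∑ k ∈ range (n + 1), c k * y ^ k) * -Real.exp (-y)) := by
      rw [hsum]; ring
    rw [heq]
    exact h
  -- tendsto 0 at infinity
  have htend : Tendsto (fun y => -((∑ k ∈ range (n + 1), c k * y ^ k) * Real.exp (-y)))
      atTop (𝓝 0) := by
    have h1 : Tendsto (fun y => ∑ k ∈ range (n + 1), c k * (y ^ k * Real.exp (-y)))
        atTop (𝓝 (∑ k ∈ range (n + 1), c k * 0)) :=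
      tendsto_finset_sum _ fun k _ =>
        (Real.tendsto_pow_mul_exp_neg_atTop_nhds_zero k).const_mul (c k)
    simp only [mul_zero, Finset.sum_const_zero] at h1
    have h2 := h1.neg
    rw [neg_zero] at h2
    refine h2.congr fun y => ?_
    congr 1
    rw [Finset.sum_mul]
    exact Finset.sum_congr rfl fun k _ => by ring
  -- compute the integral
  have hint : ∫ y in Set.Ici x, y ^ n * Real.exp (-y)
      = (∑ k ∈ range (n + 1), c k * x ^ k) * Real.exp (-x) := by
    rw [MeasureTheory.integral_Ici_eq_integral_Ioi]
    have := integral_Ioi_of_hasDerivAt_of_nonneg'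
      (g := fun y => -((∑ k ∈ range (n + 1), c k * y ^ k) * Real.exp (-y)))
      (g' := fun y => y ^ n * Real.exp (-y)) (a := x) (l := 0)
      (fun y _ => hderiv y)
      (fun y hy => mul_nonneg (pow_nonneg (le_trans hx (le_of_lt hy)) n) (Real.exp_nonneg _))
      htend
    rw [this]
    ring
  have hsub : (n + 1 : ℕ) - 1 = n := by omega
  rw [hsub, hint]
  -- final comparison
  apply mul_le_mul_of_nonneg_right _ (Real.exp_nonneg (-x))
  rw [le_div_iff₀ (by positivity : (0 : ℝ) < ((n + 1 : ℕ) : ℝ) * b)]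
  exact main
end

section
/- Let $s \ge 1$ and let $A_1,\dots,A_s < 1$ be pairwise distinct reals. Define $\phi(a) = \prod_{j=1}^s (a - A_j)$ and, for $\epsilon \in (0,1]$, let $K_\epsilon = \{\mathbf{t} \in [0,1]^s : \prod_{j=1}^s t_j \ge \epsilon\}$. Then $\int_{K_\epsilon} \prod_{j=1}^s t_j^{-A_j}\, d\mathbf{t} = \frac{1}{\phi(1)} + \sum_{j=1}^s \frac{\epsilon^{1-A_j}}{(A_j-1)\,\phi'(A_j)}$. -/
open MeasureTheory

open Finset in
private lemma deriv_prod_sub {n : ℕ} (A : Fin n → ℝ) (j : Fin n) :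
    deriv (fun a : ℝ => ∏ k, (a - A k)) (A j)
      = ∏ k ∈ univ.erase j, (A j - A k) := by
  have h : (fun a : ℝ => ∏ k, (a - A k))
      = fun a : ℝ => Polynomial.eval a (Lagrange.nodal univ A) := by
    funext a; rw [Lagrange.eval_nodal]
  rw [h, Polynomial.deriv, Lagrange.eval_nodal_derivative_eval_node_eq (mem_univ j),
    Lagrange.eval_nodal]

open Finset in
private lemma erase_last_prod {n : ℕ} (f : Fin (n+1) → ℝ) :
    ∏ k ∈ univ.erase (Fin.last n), f k = ∏ k : Fin n, f k.castSucc := by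
  rw [Fin.univ_castSuccEmb, Finset.erase_cons, prod_map]
  rfl

open Finset in
private lemma erase_castSucc_prod {n : ℕ} (f : Fin (n+1) → ℝ) (j : Fin n) :
    ∏ k ∈ univ.erase j.castSucc, f k
      = f (Fin.last n) * ∏ k ∈ univ.erase j, f k.castSucc := by
  have hne : Fin.last n ∉ (univ.map Fin.castSuccEmb).erase j.castSucc := by
    simp only [Finset.mem_erase, Finset.mem_map, Fin.castSuccEmb_apply, not_and,
      not_exists]
    intro _ x _
    exact (Fin.ne_of_lt (Fin.castSucc_lt_last x))
  have hmap : (univ.map Fin.castSuccEmb).erase j.castSucc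
      = (univ.erase j).map Fin.castSuccEmb := (Finset.map_erase Fin.castSuccEmb univ j).symm
  rw [Fin.univ_castSuccEmb, Finset.cons_eq_insert,
    erase_insert_of_ne (Fin.ne_of_lt (Fin.castSucc_lt_last j)).symm,
    prod_insert hne, hmap, prod_map]
  rfl

private lemma oneD {a A : ℝ} (ha : 0 < a) (ha1 : a ≤ 1) (hA : A ≠ 1) :
    ∫ x in Set.Icc a 1, x ^ (-A) = (1 - a ^ (1 - A)) / (1 - A) := by
  rw [integral_Icc_eq_integral_Ioc, ← intervalIntegral.integral_of_le ha1,
    integral_rpow (Or.inr ⟨fun h => hA (neg_injective h),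
      fun h => absurd (Set.uIcc_of_le ha1 ▸ h).1 (not_le.mpr ha)⟩)]
  rw [show -A + 1 = 1 - A from by ring, Real.one_rpow]

open Finset in
private lemma mem_K_pos {n : ℕ} {t : Fin n → ℝ} {ε : ℝ}
    (ht : t ∈ Set.Icc (0 : Fin n → ℝ) 1 ∩ {t | ε ≤ ∏ j, t j}) (j : Fin n) :
    ε ≤ t j := by
  obtain ⟨⟨h0, h1⟩, hp⟩ := ht
  have h0' : ∀ k, 0 ≤ t k := fun k => by simpa using h0 k
  have h1' : ∀ k, t k ≤ 1 := fun k => by simpa using h1 k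
  have hle : ∏ k, t k ≤ t j := by
    rw [← Finset.mul_prod_erase univ t (mem_univ j)]
    calc t j * ∏ k ∈ univ.erase j, t k ≤ t j * 1 :=
          mul_le_mul_of_nonneg_left
            (Finset.prod_le_one (fun k _ => h0' k) (fun k _ => h1' k)) (h0' j)
      _ = t j := mul_one _
  exact le_trans hp hle

open Finset in
private lemma measurableSet_K {n : ℕ} (ε : ℝ) :
    MeasurableSet (Set.Icc (0 : Fin n → ℝ) 1 ∩ {t | ε ≤ ∏ j, t j}) :=
  measurableSet_Icc.inter (measurableSet_le measurable_const
    (Finset.measurable_prod univ (fun j _ => measurable_pi_apply j)))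

open Finset in
private lemma integrableOn_K {n : ℕ} (A : Fin n → ℝ) {ε : ℝ} (hε : 0 < ε) :
    IntegrableOn (fun t : Fin n → ℝ => ∏ j, t j ^ (-(A j)))
      (Set.Icc (0 : Fin n → ℝ) 1 ∩ {t | ε ≤ ∏ j, t j}) := by
  have hclosed : IsClosed (Set.Icc (0 : Fin n → ℝ) 1 ∩ {t | ε ≤ ∏ j, t j}) :=
    isClosed_Icc.inter (isClosed_le continuous_const
      (continuous_finset_prod univ (fun j _ => continuous_apply j)))
  have hK : IsCompact (Set.Icc (0 : Fin n → ℝ) 1 ∩ {t | ε ≤ ∏ j, t j}) :=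
    isCompact_Icc.of_isClosed_subset hclosed Set.inter_subset_left
  refine ContinuousOn.integrableOn_compact hK ?_
  intro t ht
  refine ContinuousAt.continuousWithinAt ?_
  have hpos := fun j => lt_of_lt_of_le hε (mem_K_pos ht j)
  have hc : ∀ j : Fin n, ContinuousAt (fun p : Fin n → ℝ => p j ^ (-(A j))) t := by
    intro j
    have h1 : ContinuousAt (fun x : ℝ => x ^ (-(A j))) (t j) :=
      Real.continuousAt_rpow_const (t j) (-(A j)) (Or.inl (ne_of_gt (hpos j)))
    exact ContinuousAt.comp (f := fun p : Fin n → ℝ => p j) (x := t) h1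
      ((continuous_apply j).continuousAt)
  exact tendsto_finset_prod _ (fun j _ => hc j)

open Finset in
private lemma prod_snoc_rpow {n : ℕ} (A : Fin (n+1) → ℝ) (y : Fin n → ℝ) (x : ℝ) :
    ∏ j, (Fin.snoc y x : Fin (n+1) → ℝ) j ^ (-(A j))
      = (∏ j, y j ^ (-(A j.castSucc))) * x ^ (-(A (Fin.last n))) := by
  rw [Fin.prod_univ_castSucc]
  simp [Fin.snoc_castSucc, Fin.snoc_last]

open Finset in
private lemma prod_snoc {n : ℕ} (y : Fin n → ℝ) (x : ℝ) :
    ∏ j, (Fin.snoc y x : Fin (n+1) → ℝ) j = (∏ j, y j) * x := by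
  rw [Fin.prod_univ_castSucc]
  simp [Fin.snoc_castSucc, Fin.snoc_last]

private lemma snoc_mem_Icc {n : ℕ} (y : Fin n → ℝ) (x : ℝ) :
    (Fin.snoc y x : Fin (n+1) → ℝ) ∈ Set.Icc (0 : Fin (n+1) → ℝ) 1
      ↔ y ∈ Set.Icc (0 : Fin n → ℝ) 1 ∧ x ∈ Set.Icc (0:ℝ) 1 := by
  simp only [Set.mem_Icc, Pi.le_def]
  constructor
  · rintro ⟨h0, h1⟩
    refine ⟨⟨fun j => ?_, fun j => ?_⟩, ⟨?_, ?_⟩⟩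
    · simpa [Fin.snoc_castSucc] using h0 j.castSucc
    · simpa [Fin.snoc_castSucc] using h1 j.castSucc
    · simpa [Fin.snoc_last] using h0 (Fin.last n)
    · simpa [Fin.snoc_last] using h1 (Fin.last n)
  · rintro ⟨⟨hy0, hy1⟩, hx0, hx1⟩
    constructor <;> intro j <;> induction j using Fin.lastCases with
    | last => simpa [Fin.snoc_last]
    | cast i => simpa [Fin.snoc_castSucc] using (by first | exact hy0 i | exact hy1 i)

open Finset in
private lemma inner_step {n : ℕ} (A : Fin (n+1) → ℝ) (hb : A (Fin.last n) ≠ 1)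
    {ε : ℝ} (hε0 : 0 < ε) (y : Fin n → ℝ) :
    (∫ x : ℝ, (Set.Icc (0:Fin (n+1)→ℝ) 1 ∩ {t | ε ≤ ∏ j, t j}).indicator
        (fun t => ∏ j, t j ^ (-(A j))) (Fin.snoc y x))
    = (Set.Icc (0:Fin n→ℝ) 1 ∩ {y | ε ≤ ∏ j, y j}).indicator
        (fun y => (∏ j, y j ^ (-(A j.castSucc))) *
          ((1 - (ε / ∏ j, y j) ^ (1 - A (Fin.last n))) / (1 - A (Fin.last n)))) y := by
  set P := ∏ j, y j with hP
  by_cases hy : y ∈ Set.Icc (0:Fin n→ℝ) 1 ∧ ε ≤ P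
  · have hyIcc := hy.1
    have hPε := hy.2
    have hP0 : 0 < P := lt_of_lt_of_le hε0 hPε
    have hεP0 : 0 < ε / P := div_pos hε0 hP0
    have hεP1 : ε / P ≤ 1 := (div_le_one hP0).mpr hPε
    have hfun : (fun x : ℝ => (Set.Icc (0:Fin (n+1)→ℝ) 1 ∩ {t | ε ≤ ∏ j, t j}).indicator
        (fun t => ∏ j, t j ^ (-(A j))) (Fin.snoc y x))
        = Set.indicator (Set.Icc (ε / P) 1)
            (fun x => (∏ j, y j ^ (-(A j.castSucc))) * x ^ (-(A (Fin.last n)))) := by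
      funext x
      by_cases hx : x ∈ Set.Icc (ε / P) 1
      · have hx0 : 0 ≤ x := le_trans hεP0.le hx.1
        have hmem : (Fin.snoc y x : Fin (n+1) → ℝ)
            ∈ Set.Icc (0:Fin (n+1)→ℝ) 1 ∩ {t | ε ≤ ∏ j, t j} := by
          refine ⟨(snoc_mem_Icc y x).mpr ⟨hyIcc, hx0, hx.2⟩, ?_⟩
          show ε ≤ ∏ j, (Fin.snoc y x : Fin (n+1) → ℝ) j
          rw [prod_snoc, ← hP]
          exact (div_le_iff₀' hP0).mp hx.1
        rw [Set.indicator_of_mem hmem, Set.indicator_of_mem hx, prod_snoc_rpow]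
      · have hmem : (Fin.snoc y x : Fin (n+1) → ℝ)
            ∉ Set.Icc (0:Fin (n+1)→ℝ) 1 ∩ {t | ε ≤ ∏ j, t j} := by
          intro hmem
          obtain ⟨hIcc, hprod⟩ := hmem
          obtain ⟨_, hx0, hx1⟩ := (snoc_mem_Icc y x).mp hIcc
          have : ε ≤ P * x := by
            have := hprod
            rwa [Set.mem_setOf_eq, prod_snoc, ← hP] at this
          exact hx ⟨(div_le_iff₀' hP0).mpr this, hx1⟩
        rw [Set.indicator_of_notMem hmem, Set.indicator_of_notMem hx]
    rw [hfun, integral_indicator measurableSet_Icc,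
      MeasureTheory.integral_const_mul, oneD hεP0 hεP1 hb,
      Set.indicator_of_mem (Set.mem_inter hyIcc hPε)]
  · have hzero : ∀ x : ℝ, (Set.Icc (0:Fin (n+1)→ℝ) 1 ∩ {t | ε ≤ ∏ j, t j}).indicator
        (fun t => ∏ j, t j ^ (-(A j))) (Fin.snoc y x) = 0 := by
      intro x
      refine Set.indicator_of_notMem ?_ _
      intro hmem
      obtain ⟨hIcc, hprod⟩ := hmem
      obtain ⟨hyIcc, hx0, hx1⟩ := (snoc_mem_Icc y x).mp hIcc
      have hPx : ε ≤ P * x := by rwa [Set.mem_setOf_eq, prod_snoc, ← hP] at hprod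
      have hP0 : 0 ≤ P := Finset.prod_nonneg (fun j _ => by simpa using hyIcc.1 j)
      have : P * x ≤ P := by nlinarith
      exact hy ⟨hyIcc, le_trans hPx this⟩
    simp only [hzero, integral_zero]
    rw [Set.indicator_of_notMem (by rw [Set.mem_inter_iff]; exact fun h => hy ⟨h.1, h.2⟩)]

open Finset in
private lemma fubini_step {n : ℕ} (A : Fin (n+1) → ℝ) {ε : ℝ} (hε0 : 0 < ε) :
    ∫ t in Set.Icc (0 : Fin (n+1) → ℝ) 1 ∩ {t | ε ≤ ∏ j, t j}, ∏ j, t j ^ (-(A j))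
      = ∫ y : Fin n → ℝ, ∫ x : ℝ,
          (Set.Icc (0:Fin (n+1)→ℝ) 1 ∩ {t | ε ≤ ∏ j, t j}).indicator
            (fun t => ∏ j, t j ^ (-(A j))) (Fin.snoc y x) := by
  set K := Set.Icc (0 : Fin (n+1) → ℝ) 1 ∩ {t | ε ≤ ∏ j, t j} with hK
  set g := K.indicator (fun t : Fin (n+1) → ℝ => ∏ j, t j ^ (-(A j))) with hg
  have hgint : Integrable g := (integrableOn_K A hε0).integrable_indicator (measurableSet_K ε)
  set e := MeasurableEquiv.piFinSuccAbove (fun _ : Fin (n+1) => ℝ) (Fin.last n) with he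
  have hmp : MeasurePreserving e.symm :=
    (volume_preserving_piFinSuccAbove (fun _ : Fin (n+1) => ℝ) (Fin.last n)).symm
  have hsymm : ∀ z : ℝ × (Fin n → ℝ), e.symm z = Fin.snoc z.2 z.1 := by
    intro z
    show (Fin.insertNthEquiv (fun _ => ℝ) (Fin.last n)) z = Fin.snoc z.2 z.1
    rw [Fin.insertNthEquiv_last]
    rfl
  rw [← integral_indicator (measurableSet_K ε), ← hg]
  rw [← hmp.integral_comp' g]
  have hint2 : Integrable (fun z : ℝ × (Fin n → ℝ) => g (e.symm z))
      (volume.prod volume) := by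
    rw [← Measure.volume_eq_prod]
    exact (hmp.integrable_comp_emb e.symm.measurableEmbedding).mpr hgint
  calc ∫ z : ℝ × (Fin n → ℝ), g (e.symm z)
      = ∫ z : ℝ × (Fin n → ℝ), g (e.symm z) ∂(volume.prod volume) := by
        rw [← Measure.volume_eq_prod]
    _ = ∫ y : Fin n → ℝ, ∫ x : ℝ, g (e.symm (x, y)) := integral_prod_symm _ hint2
    _ = _ := by
        congr 1
        funext y
        congr 1
        funext x
        rw [hsymm (x, y)]

open Finset in
private lemma alg_step {n : ℕ} (A : Fin (n+1) → ℝ) (hA1 : ∀ j, A j ≠ 1)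
    (hinj : Function.Injective A) {ε : ℝ} (hε0 : 0 < ε) :
    (1 - A (Fin.last n))⁻¹ * ((∏ j : Fin n, (1 - A j.castSucc))⁻¹
        + ∑ j : Fin n, ε ^ (1 - A j.castSucc) /
            ((A j.castSucc - 1) * ∏ k ∈ univ.erase j, (A j.castSucc - A k.castSucc)))
      - (1 - A (Fin.last n))⁻¹ * ε ^ (1 - A (Fin.last n)) *
          ((∏ j : Fin n, (1 - (A j.castSucc + (1 - A (Fin.last n)))))⁻¹
            + ∑ j : Fin n, ε ^ (1 - (A j.castSucc + (1 - A (Fin.last n)))) /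
              ((A j.castSucc + (1 - A (Fin.last n)) - 1) *
                ∏ k ∈ univ.erase j,
                  (A j.castSucc + (1 - A (Fin.last n)) - (A k.castSucc + (1 - A (Fin.last n))))))
      = (∏ j : Fin (n+1), (1 - A j))⁻¹
        + ∑ j : Fin (n+1), ε ^ (1 - A j) / ((A j - 1) * ∏ k ∈ univ.erase j, (A j - A k)) := by
  set b := A (Fin.last n) with hb
  set c := 1 - b with hc
  have hcne : c ≠ 0 := sub_ne_zero_of_ne (Ne.symm (hA1 _))
  have hAne : ∀ j : Fin n, A j.castSucc - 1 ≠ 0 := fun j => sub_ne_zero_of_ne (hA1 _)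
  have hAbne : ∀ j : Fin n, A j.castSucc - b ≠ 0 := fun j =>
    sub_ne_zero_of_ne (fun h => (Fin.ne_of_lt (Fin.castSucc_lt_last j)) (hinj h))
  have hbAne : ∀ j : Fin n, b - A j.castSucc ≠ 0 := fun j =>
    sub_ne_zero_of_ne (fun h => (Fin.ne_of_lt (Fin.castSucc_lt_last j)) (hinj h.symm))
  have hDne : ∀ j : Fin n, (∏ k ∈ univ.erase j, (A j.castSucc - A k.castSucc)) ≠ 0 := by
    intro j
    refine Finset.prod_ne_zero_iff.mpr (fun k hk => sub_ne_zero_of_ne (fun h => ?_))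
    exact (mem_erase.mp hk).1 (Fin.castSucc_injective n (hinj h)).symm
  have hXne : (∏ j : Fin n, (1 - A j.castSucc)) ≠ 0 :=
    Finset.prod_ne_zero_iff.mpr (fun j _ => sub_ne_zero_of_ne (fun h => hA1 _ h.symm))
  have hWne : (∏ j : Fin n, (b - A j.castSucc)) ≠ 0 :=
    Finset.prod_ne_zero_iff.mpr (fun j _ => hbAne j)
  have e1 : ∀ j : Fin n, 1 - (A j.castSucc + c) = b - A j.castSucc := fun j => by
    rw [hc]; ring
  have e2 : ∀ j : Fin n, A j.castSucc + c - 1 = A j.castSucc - b := fun j => by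
    rw [hc]; ring
  have e3 : ∀ j k : Fin n, A j.castSucc + c - (A k.castSucc + c)
      = A j.castSucc - A k.castSucc := fun j k => by ring
  simp only [e1, e2, e3]
  rw [Fin.prod_univ_castSucc, Fin.sum_univ_castSucc]
  simp only [erase_castSucc_prod (fun k => A _ - A k), erase_last_prod (fun k => A _ - A k)]
  rw [← hb, ← hc]
  rw [mul_add, mul_add, Finset.mul_sum, Finset.mul_sum]
  have hre : ∀ (u v Sa Sb : ℝ), (u + Sa) - (v + Sb) = (u - v) + (Sa - Sb) := by intros; ring
  rw [hre, ← Finset.sum_sub_distrib]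
  have hterm : ∀ j ∈ (univ : Finset (Fin n)),
      c⁻¹ * (ε ^ (1 - A j.castSucc) /
          ((A j.castSucc - 1) * ∏ k ∈ univ.erase j, (A j.castSucc - A k.castSucc)))
        - c⁻¹ * ε ^ c * (ε ^ (b - A j.castSucc) /
          ((A j.castSucc - b) * ∏ k ∈ univ.erase j, (A j.castSucc - A k.castSucc)))
      = ε ^ (1 - A j.castSucc) /
          ((A j.castSucc - 1) * ((A j.castSucc - b) *
            ∏ k ∈ univ.erase j, (A j.castSucc - A k.castSucc))) := by
    intro j _
    have h1 := hAne j
    have h2 := hAbne j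
    have h3 := hDne j
    have hpow : ε ^ c * ε ^ (b - A j.castSucc) = ε ^ (1 - A j.castSucc) := by
      rw [← Real.rpow_add hε0]
      congr 1
      rw [hc]; ring
    rw [← hpow]
    field_simp
    ring
  rw [Finset.sum_congr rfl hterm]
  have hconst : c⁻¹ * (∏ j : Fin n, (1 - A j.castSucc))⁻¹
      - c⁻¹ * ε ^ c * (∏ j : Fin n, (b - A j.castSucc))⁻¹
    = ((∏ j : Fin n, (1 - A j.castSucc)) * c)⁻¹
      + ε ^ c / ((b - 1) * ∏ k : Fin n, (b - A k.castSucc)) := by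
    have hb1 : b - 1 = -c := by rw [hc]; ring
    rw [hb1]
    field_simp
    ring
  rw [hconst]
  ring

open Finset in
private lemma sobol_aux (n : ℕ) : ∀ (A : Fin n → ℝ), (∀ j, A j ≠ 1) → Function.Injective A →
    ∀ ε : ℝ, 0 < ε → ε ≤ 1 →
    ∫ t in Set.Icc (0 : Fin n → ℝ) 1 ∩ {t | ε ≤ ∏ j, t j}, ∏ j, t j ^ (-(A j))
      = (∏ j, (1 - A j))⁻¹
        + ∑ j, ε ^ (1 - A j) / ((A j - 1) * ∏ k ∈ univ.erase j, (A j - A k)) := by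
  induction n with
  | zero =>
    intro A hA1 hinj ε hε0 hε1
    have hset : Set.Icc (0 : Fin 0 → ℝ) 1 ∩ {t | ε ≤ ∏ j, t j} = Set.univ := by
      ext t
      simp only [Set.mem_inter_iff, Set.mem_Icc, Set.mem_setOf_eq, Set.mem_univ, iff_true]
      exact ⟨⟨fun j => j.elim0, fun j => j.elim0⟩, by simpa using hε1⟩
    rw [hset]
    simp only [univ_eq_empty, prod_empty, sum_empty, add_zero, inv_one]
    rw [setIntegral_const]
    simp [MeasureTheory.volume_pi, Measure.pi_univ, measureReal_def]
  | succ n ih =>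
    intro A hA1 hinj ε hε0 hε1
    set b := A (Fin.last n) with hbdef
    have hbne : b ≠ 1 := hA1 _
    set c := 1 - b with hcdef
    have hcne : c ≠ 0 := sub_ne_zero_of_ne (Ne.symm hbne)
    set A' : Fin n → ℝ := fun j => A j.castSucc with hA'def
    set B : Fin n → ℝ := fun j => A j.castSucc + c with hBdef
    have hA'1 : ∀ j, A' j ≠ 1 := fun j => hA1 _
    have hA'inj : Function.Injective A' := fun i j h =>
      Fin.castSucc_injective n (hinj h)
    have hB1 : ∀ j, B j ≠ 1 := by
      intro j h
      apply (Fin.ne_of_lt (Fin.castSucc_lt_last j)) (hinj ?_)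
      have : A j.castSucc = b := by simp only [hBdef, hcdef] at h; linarith
      simpa [hbdef] using this
    have hBinj : Function.Injective B := by
      intro i j h
      exact hA'inj (by simpa [hBdef] using h)
    rw [fubini_step A hε0]
    have hinner : ∀ y : Fin n → ℝ, (∫ x : ℝ,
        (Set.Icc (0:Fin (n+1)→ℝ) 1 ∩ {t | ε ≤ ∏ j, t j}).indicator
          (fun t => ∏ j, t j ^ (-(A j))) (Fin.snoc y x))
        = (Set.Icc (0:Fin n→ℝ) 1 ∩ {y | ε ≤ ∏ j, y j}).indicator
            (fun y => (∏ j, y j ^ (-(A' j))) *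
              ((1 - (ε / ∏ j, y j) ^ c) / c)) y := fun y => inner_step A hbne hε0 y
    simp only [hinner]
    rw [integral_indicator (measurableSet_K ε)]
    have hcongr : ∫ y in Set.Icc (0:Fin n→ℝ) 1 ∩ {y | ε ≤ ∏ j, y j},
          (∏ j, y j ^ (-(A' j))) * ((1 - (ε / ∏ j, y j) ^ c) / c)
        = ∫ y in Set.Icc (0:Fin n→ℝ) 1 ∩ {y | ε ≤ ∏ j, y j},
          (c⁻¹ * (∏ j, y j ^ (-(A' j))) - (c⁻¹ * ε ^ c) * (∏ j, y j ^ (-(B j)))) := by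
      refine setIntegral_congr_fun (measurableSet_K ε) ?_
      intro y hy
      have hyj : ∀ j, 0 < y j := fun j => lt_of_lt_of_le hε0 (mem_K_pos hy j)
      have hP : 0 < ∏ j, y j := Finset.prod_pos (fun j _ => hyj j)
      have hdiv : (ε / ∏ j, y j) ^ c = ε ^ c / (∏ j, y j) ^ c :=
        Real.div_rpow hε0.le hP.le c
      have hprodc : (∏ j, y j) ^ c = ∏ j, y j ^ c :=
        (Real.finset_prod_rpow univ y (fun j _ => (hyj j).le) c).symm
      have hBprod : ∏ j, y j ^ (-(B j)) = (∏ j, y j ^ (-(A' j))) / ∏ j, y j ^ c := by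
        rw [← Finset.prod_div_distrib]
        refine Finset.prod_congr rfl (fun j _ => ?_)
        rw [← Real.rpow_sub (hyj j)]
        congr 1
        simp [hBdef, hA'def]
        ring
      dsimp only
      rw [hdiv, hprodc, hBprod]
      have hprodcne : (∏ j, y j ^ c) ≠ 0 := by
        rw [← hprodc]; positivity
      field_simp
    rw [hcongr, integral_sub ((integrableOn_K A' hε0).const_mul _)
        ((integrableOn_K B hε0).const_mul _),
      MeasureTheory.integral_const_mul, MeasureTheory.integral_const_mul,
      ih A' hA'1 hA'inj ε hε0 hε1, ih B hB1 hBinj ε hε0 hε1]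
    simp only [hA'def, hBdef]
    simp only [hcdef]
    simp only [hbdef]
    exact alg_step A hA1 hinj hε0

/-- Sobol' (1973): for pairwise distinct `A_j < 1`, `φ(a) = ∏_j (a - A_j)` and the
hyperbolic set `K_ε = {t ∈ [0,1]^s : ∏ t_j ≥ ε}`,
`∫_{K_ε} ∏ t_j^{-A_j} dt = 1/φ(1) + ∑_j ε^{1-A_j} / ((A_j-1) φ'(A_j))`. -/
theorem stmt3 (s : ℕ) (hs : 1 ≤ s) (A : Fin s → ℝ) (hA1 : ∀ j, A j < 1)
    (hA : Function.Injective A) (ε : ℝ) (hε : ε ∈ Set.Ioc (0 : ℝ) 1) :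
    ∫ t in Set.Icc (0 : Fin s → ℝ) 1 ∩ {t | ε ≤ ∏ j, t j}, ∏ j, t j ^ (-(A j))
      = 1 / ((fun a : ℝ => ∏ j, (a - A j)) 1)
        + ∑ j, ε ^ (1 - A j) / ((A j - 1) * deriv (fun a : ℝ => ∏ k, (a - A k)) (A j)) := by
  rw [sobol_aux s A (fun j => ne_of_lt (hA1 j)) hA ε hε.1 hε.2]
  congr 1
  · simp [one_div]
  · refine Finset.sum_congr rfl (fun j _ => ?_)
    rw [deriv_prod_sub]
end

section
/- Suppose $|\Phi^{-1}(t)| \le \sqrt{-2\log(1-t)} + \bar\epsilon$ for $t\in[1/2,1)$ with some constant $\bar\epsilon \ge 0$, where $\Phi^{-1}$ is the inverse standard normal CDF. Then for $t \in [1/2,1)$, $\frac{d}{dt}\Phi^{-1}(t) \le \sqrt{2\pi}\, e^{\bar\epsilon^2/2}\, (1-t)^{-(1+\bar\epsilon)}$. -/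
open MeasureTheory Real Set

noncomputable def stdNormalCDF (x : ℝ) : ℝ :=
  ∫ y in Set.Iic x, (Real.sqrt (2 * Real.pi))⁻¹ * Real.exp (-y ^ 2 / 2)

namespace StdNormalAux

noncomputable def f (y : ℝ) : ℝ := (Real.sqrt (2 * Real.pi))⁻¹ * Real.exp (-y ^ 2 / 2)

lemma sqrt2pi_pos : 0 < Real.sqrt (2 * Real.pi) :=
  Real.sqrt_pos.2 (by positivity)

lemma f_cont : Continuous f := by
  unfold f; continuity

lemma f_pos (y : ℝ) : 0 < f y := by
  unfold f; positivity

lemma gauss_eq : (fun y : ℝ => Real.exp (-y ^ 2 / 2)) = fun y : ℝ => Real.exp (-(1/2) * y ^ 2) := by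
  funext y; ring_nf

lemma gauss_int : Integrable (fun y : ℝ => Real.exp (-y ^ 2 / 2)) := by
  rw [gauss_eq]
  exact integrable_exp_neg_mul_sq (by norm_num)

lemma f_int : Integrable f := (gauss_int.const_mul _)

lemma total : ∫ y : ℝ, f y = 1 := by
  unfold f
  rw [MeasureTheory.integral_const_mul, gauss_eq, integral_gaussian]
  rw [show Real.pi / (1/2 : ℝ) = 2 * Real.pi by ring]
  exact inv_mul_cancel₀ (ne_of_gt sqrt2pi_pos)

lemma cdf_eq (x : ℝ) : stdNormalCDF x = stdNormalCDF 0 + ∫ y in (0:ℝ)..x, f y := by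
  rw [← intervalIntegral.integral_Iic_sub_Iic f_int.integrableOn f_int.integrableOn]
  unfold stdNormalCDF f
  ring

lemma hasStrictDeriv (x : ℝ) : HasStrictDerivAt stdNormalCDF (f x) x := by
  have h := (f_cont.integral_hasStrictDerivAt 0 x).const_add (stdNormalCDF 0)
  have : (fun u => stdNormalCDF 0 + ∫ y in (0:ℝ)..u, f y) = stdNormalCDF := by
    funext u; rw [cdf_eq u]
  rwa [this] at h

lemma cdf_cont : Continuous stdNormalCDF := by
  have h : Differentiable ℝ stdNormalCDF := fun x => (hasStrictDeriv x).hasDerivAt.differentiableAt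
  exact h.continuous

lemma cdf_mono : StrictMono stdNormalCDF := by
  apply strictMono_of_deriv_pos
  intro x
  rw [(hasStrictDeriv x).hasDerivAt.deriv]
  exact f_pos x

lemma one_sub_cdf (x : ℝ) : 1 - stdNormalCDF x = ∫ y in Set.Ioi x, f y := by
  have := integral_add_compl (measurableSet_Iic (a := x)) f_int
  rw [compl_Iic] at this
  have ht := total
  unfold stdNormalCDF
  unfold f at this ht ⊢
  linarith

lemma tail_bound {x : ℝ} (hx : 0 ≤ x) : 1 - stdNormalCDF x ≤ Real.exp (-x ^ 2 / 2) := by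
  rw [one_sub_cdf]
  have maj : ∀ y ∈ Set.Ioi x, f y ≤ Real.exp (-x ^ 2 / 2) * f (y - x) := by
    intro y hy
    simp only [Set.mem_Ioi] at hy
    unfold f
    rw [← mul_assoc, mul_comm (Real.exp (-x^2/2)), mul_assoc, ← Real.exp_add]
    apply mul_le_mul_of_nonneg_left _ (by positivity : (0:ℝ) ≤ (Real.sqrt (2 * Real.pi))⁻¹)
    apply Real.exp_le_exp.2
    nlinarith
  calc ∫ y in Set.Ioi x, f y ≤ ∫ y in Set.Ioi x, Real.exp (-x ^ 2 / 2) * f (y - x) := by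
        apply setIntegral_mono_on (f_int.integrableOn)
          (((f_int.comp_sub_right x).const_mul _).integrableOn) measurableSet_Ioi maj
    _ ≤ ∫ y : ℝ, Real.exp (-x ^ 2 / 2) * f (y - x) := by
        apply setIntegral_le_integral ((f_int.comp_sub_right x).const_mul _)
        filter_upwards with y
        exact le_of_lt (mul_pos (Real.exp_pos _) (f_pos _))
    _ = Real.exp (-x ^ 2 / 2) := by
        rw [MeasureTheory.integral_const_mul]
        have : ∫ y : ℝ, f (y - x) = ∫ y : ℝ, f y := by
          exact integral_sub_right_eq_self f x
        rw [this, total, mul_one]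

lemma cdf_zero : stdNormalCDF 0 = 1/2 := by
  have h0 : ∫ y in Set.Ioi (0:ℝ), f (-y) = ∫ y in Set.Iic (0:ℝ), f y := by
    simpa using integral_comp_neg_Ioi (0:ℝ) f
  have hs : ∫ y in Set.Iic (0:ℝ), f y = ∫ y in Set.Ioi (0:ℝ), f y := by
    rw [← h0]
    apply setIntegral_congr_fun measurableSet_Ioi
    intro y _
    unfold f; ring_nf
  have h1 := one_sub_cdf 0
  unfold stdNormalCDF at *
  unfold f at hs h1
  linarith

end StdNormalAux

/-- If the inverse standard normal CDF satisfies
`|Φ⁻¹(t)| ≤ √(-2 log(1-t)) + ε̄` on `[1/2,1)` with `ε̄ ≥ 0`, then on `[1/2,1)`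
its derivative satisfies `(Φ⁻¹)'(t) ≤ √(2π) e^{ε̄²/2} (1-t)^{-(1+ε̄)}`. -/
theorem stmt11 (Φinv : ℝ → ℝ)
    (hleft : ∀ x : ℝ, Φinv (stdNormalCDF x) = x)
    (hright : ∀ t ∈ Set.Ioo (0 : ℝ) 1, stdNormalCDF (Φinv t) = t)
    (ebar : ℝ) (hebar : 0 ≤ ebar)
    (hbound : ∀ t ∈ Set.Ico (1/2 : ℝ) 1,
      |Φinv t| ≤ Real.sqrt (-2 * Real.log (1 - t)) + ebar) :
    ∀ t ∈ Set.Ico (1/2 : ℝ) 1,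
      deriv Φinv t
        ≤ Real.sqrt (2 * Real.pi) * Real.exp (ebar ^ 2 / 2) * (1 - t) ^ (-(1 + ebar)) := by
  intro t ht
  obtain ⟨ht1, ht2⟩ := ht
  have ht0 : (0:ℝ) < t := lt_of_lt_of_le (by norm_num) ht1
  have htIoo : t ∈ Set.Ioo (0:ℝ) 1 := ⟨ht0, ht2⟩
  set x₀ := Φinv t with hx₀
  have hcdf : stdNormalCDF x₀ = t := hright t htIoo
  -- continuity of Φinv at t
  have hcont : ContinuousAt Φinv t := by
    rw [Metric.continuousAt_iff]
    intro ε hε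
    have ha : stdNormalCDF (x₀ - ε) < t := by
      rw [← hcdf]; exact StdNormalAux.cdf_mono (by linarith)
    have hb : t < stdNormalCDF (x₀ + ε) := by
      rw [← hcdf]; exact StdNormalAux.cdf_mono (by linarith)
    refine ⟨min (t - stdNormalCDF (x₀ - ε)) (stdNormalCDF (x₀ + ε) - t), by
      apply lt_min <;> linarith, ?_⟩
    intro s hs
    rw [Real.dist_eq] at hs
    have hs1 : stdNormalCDF (x₀ - ε) < s := by
      have := abs_lt.1 (lt_of_lt_of_le hs (min_le_left _ _))
      linarith [this.1]
    have hs2 : s < stdNormalCDF (x₀ + ε) := by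
      have := abs_lt.1 (lt_of_lt_of_le hs (min_le_right _ _))
      linarith [this.2]
    obtain ⟨y, hy, hys⟩ := intermediate_value_Ioo (by linarith : x₀ - ε ≤ x₀ + ε)
      StdNormalAux.cdf_cont.continuousOn ⟨hs1, hs2⟩
    rw [Real.dist_eq, ← hys, hleft y]
    rw [Set.mem_Ioo] at hy
    rw [abs_lt]
    constructor <;> [linarith [hy.1]; linarith [hy.2]]
  -- derivative of Φinv
  have hderiv : HasDerivAt Φinv (StdNormalAux.f x₀)⁻¹ t := by
    have hfg : ∀ᶠ y in nhds t, stdNormalCDF (Φinv y) = y := by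
      filter_upwards [Ioo_mem_nhds ht0 ht2] using hright
    exact HasDerivAt.of_local_left_inverse hcont
      (StdNormalAux.hasStrictDeriv x₀).hasDerivAt (ne_of_gt (StdNormalAux.f_pos x₀)) hfg
  rw [hderiv.deriv]
  -- x₀ ≥ 0
  have hx0 : 0 ≤ x₀ := by
    by_contra h
    push_neg at h
    have := StdNormalAux.cdf_mono h
    rw [hcdf, StdNormalAux.cdf_zero] at this
    linarith
  -- tail bound: 1 - t ≤ exp(-x₀²/2)
  have htail : 1 - t ≤ Real.exp (-x₀ ^ 2 / 2) := by
    rw [← hcdf]; exact StdNormalAux.tail_bound hx0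
  have h1t : 0 < 1 - t := by linarith
  -- (f x₀)⁻¹ = √(2π) exp(x₀²/2)
  have hfe : (StdNormalAux.f x₀)⁻¹ = Real.sqrt (2 * Real.pi) * Real.exp (x₀ ^ 2 / 2) := by
    unfold StdNormalAux.f
    rw [mul_inv, inv_inv, ← Real.exp_neg]
    ring_nf
  rw [hfe]
  have hexp : Real.exp (x₀ ^ 2 / 2) ≤ (1 - t)⁻¹ := by
    have : (Real.exp (-x₀ ^ 2 / 2))⁻¹ ≤ (1 - t)⁻¹ := by
      apply inv_anti₀ h1t htail
    rwa [← Real.exp_neg, neg_div, neg_neg] at this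
  have hrpow : (1 - t)⁻¹ ≤ Real.exp (ebar ^ 2 / 2) * (1 - t) ^ (-(1 + ebar)) := by
    have h1 : (1 - t)⁻¹ = (1 - t) ^ (-1 : ℝ) := by
      rw [Real.rpow_neg_one]
    have h2 : (1 - t) ^ (-1 : ℝ) ≤ (1 - t) ^ (-(1 + ebar)) :=
      Real.rpow_le_rpow_of_exponent_ge h1t (by linarith) (by linarith)
    have h3 : (1 : ℝ) ≤ Real.exp (ebar ^ 2 / 2) := by
      rw [← Real.exp_zero]
      apply Real.exp_le_exp.2
      positivity
    calc (1 - t)⁻¹ = (1 - t) ^ (-1 : ℝ) := h1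
      _ ≤ (1 - t) ^ (-(1 + ebar)) := h2
      _ ≤ Real.exp (ebar ^ 2 / 2) * (1 - t) ^ (-(1 + ebar)) := by
          nlinarith [Real.rpow_pos_of_pos h1t (-(1 + ebar))]
  calc Real.sqrt (2 * Real.pi) * Real.exp (x₀ ^ 2 / 2)
      ≤ Real.sqrt (2 * Real.pi) * ((1 - t)⁻¹) :=
        mul_le_mul_of_nonneg_left hexp StdNormalAux.sqrt2pi_pos.le
    _ ≤ Real.sqrt (2 * Real.pi) * (Real.exp (ebar ^ 2 / 2) * (1 - t) ^ (-(1 + ebar))) :=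
        mul_le_mul_of_nonneg_left hrpow StdNormalAux.sqrt2pi_pos.le
    _ = Real.sqrt (2 * Real.pi) * Real.exp (ebar ^ 2 / 2) * (1 - t) ^ (-(1 + ebar)) := by ring
end
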